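/- Let G be a blow-up of the path P_t, and let ω be a C-rainbow colouring of G with |C| = c ≥ 2. If t ≥ c + 2, then m(G,ω) ≤ t − ⌈t/c⌉. -/

import Mathlib

open Classical SimpleGraph

/-- The spanning subgraph of `G` whose edges join vertices of equal colour under `ω`.
Its connected components are the monochromatic components of `(G, ω)`. -/
def monoSubgraph {V C : Type*} (G : SimpleGraph V) (ω : V → C) : SimpleGraph V where
  Adj u v := G.Adj u v ∧ ω u = ω v
  symm := ⟨fun u v h => ⟨h.1.symm, h.2.symm⟩⟩
  loopless := ⟨fun u h => G.irrefl h.1⟩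

/-- A single flooding move `(v, d)`: every vertex in the monochromatic component of `v`
receives colour `d`. -/
noncomputable def floodMove {V C : Type*} (G : SimpleGraph V) (ω : V → C) (v : V) (d : C) :
    V → C :=
  fun u => if (monoSubgraph G ω).Reachable v u then d else ω u

/-- Apply a sequence of flooding moves, in order. -/
noncomputable def floodSeq {V C : Type*} (G : SimpleGraph V) :
    List (V × C) → (V → C) → (V → C)
  | [], ω => ω
  | m :: ms, ω => floodSeq G ms (floodMove G ω m.1 m.2)

/-- `m(G, ω, d)`: the minimum number of moves needed to give every vertex colour `d`,
starting from the colouring `ω`. -/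
noncomputable def floodCost {V C : Type*} (G : SimpleGraph V) (ω : V → C) (d : C) : ℕ :=
  sInf {k | ∃ ms : List (V × C), ms.length = k ∧ ∀ v, floodSeq G ms ω v = d}

/-- `m(G, ω)`: the minimum over target colours `d ∈ C` of `m(G, ω, d)`. -/
noncomputable def floodCostMin {V C : Type*} (G : SimpleGraph V) (ω : V → C) : ℕ :=
  sInf {k | ∃ d : C, floodCost G ω d = k}

/-- `M_c(G)`: the maximum of `m(G, ω)` over all surjective colourings
`ω : V(G) → {1, …, c}`. -/
noncomputable def maxFloodCost {V : Type*} (c : ℕ) (G : SimpleGraph V) : ℕ :=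
  sSup {k | ∃ ω : V → Fin c, Function.Surjective ω ∧ floodCostMin G ω = k}

/-- `ω` is an `r`-shifted `C`-rainbow colouring of the path `v₁ … vₙ` (here indexed by
`Fin n`, with `v_i` corresponding to index `i - 1`): there is a bijective indexing
`e : ZMod c → C` of the `c` colours (combining the indexing `d` of `C` with the
permutation `π`) such that `ω(v_i) = e((i - r) mod c)` for all `1 ≤ i ≤ n`.
A `C`-rainbow colouring is a `0`-shifted `C`-rainbow colouring. -/
def IsShiftedRainbow {C : Type*} (c r : ℕ) {n : ℕ} (ω : Fin n → C) : Prop :=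
  ∃ e : ZMod c → C, Function.Bijective e ∧
    ∀ i : Fin n, ω i = e ((((i : ℕ) + 1 : ℕ) : ZMod c) - ((r : ℕ) : ZMod c))

namespace FloodAux

variable {W C : Type*} {t c : ℕ}

/-- Membership in the flooded set after `k` moves of the standard strategy started
at the vertex `w` lying in class `i`. -/
def InS (c i : ℕ) (p : W → Fin t) (w : W) (k : ℕ) (v : W) : Prop :=
  ((p v : ℕ) = i ∧ (v = w ∨ c + 1 ≤ k)) ∨
    (i < (p v : ℕ) ∧ (p v : ℕ) < i + k) ∨
    ((p v : ℕ) < i ∧ (i - (p v : ℕ)) * (c - 1) + 1 ≤ k)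

open scoped Classical in
/-- The colouring after `k` moves of the standard strategy. -/
noncomputable def stateCol (c i : ℕ) (p : W → Fin t) (w : W) (e : ZMod c → C) (k : ℕ) :
    W → C :=
  fun v => if InS c i p w k v then e ((i + k + 1 : ℕ) : ZMod c)
    else e (((p v : ℕ) + 1 : ℕ) : ZMod c)

lemma mul_pred_add (a : ℕ) (hc : 1 ≤ c) : a * (c - 1) + a = a * c := by
  cases c with
  | zero => omega
  | succ n => simp [Nat.mul_succ]

lemma e_eq_iff {e : ZMod c → C} (he : Function.Injective e) (a b : ℕ) :
    e ((a : ℕ) : ZMod c) = e ((b : ℕ) : ZMod c) ↔ a % c = b % c := by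
  rw [he.eq_iff, ZMod.natCast_eq_natCast_iff']

variable {G : SimpleGraph W} {p : W → Fin t} {e : ZMod c → C} {w : W} {i : ℕ}

lemma InS_mono {k k' : ℕ} (h : k ≤ k') {v : W} (hv : InS c i p w k v) :
    InS c i p w k' v := by
  rcases hv with ⟨h1, h2⟩ | ⟨h1, h2⟩ | ⟨h1, h2⟩
  · exact Or.inl ⟨h1, h2.imp id (fun hh => le_trans hh h)⟩
  · exact Or.inr (Or.inl ⟨h1, by omega⟩)
  · exact Or.inr (Or.inr ⟨h1, by omega⟩)

lemma colour_of_mem (he : Function.Injective e) (hc : 2 ≤ c) {k : ℕ} {v : W}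
    (hv : InS c i p w (k + 1) v) :
    stateCol c i p w e k v = e ((i + k + 1 : ℕ) : ZMod c) := by
  by_cases h : InS c i p w k v
  · simp only [stateCol, if_pos h]
  · simp only [stateCol, if_neg h]
    rw [e_eq_iff he]
    rcases hv with ⟨h1, h2⟩ | ⟨h1, h2⟩ | ⟨h1, h2⟩
    · have hk : k = c := by
        rcases h2 with h2 | h2
        · exact absurd (Or.inl ⟨h1, Or.inl h2⟩) h
        · have : ¬ (c + 1 ≤ k) := fun hh => h (Or.inl ⟨h1, Or.inr hh⟩)
          omega
      rw [h1, show i + k + 1 = (i + 1) + c from by omega, Nat.add_mod_right]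
    · have hpv : (p v : ℕ) = i + k := by
        have : ¬ ((p v : ℕ) < i + k) := fun hh => h (Or.inr (Or.inl ⟨h1, hh⟩))
        omega
      rw [hpv]
    · have hk : (i - (p v : ℕ)) * (c - 1) + 1 = k + 1 := by
        have : ¬ ((i - (p v : ℕ)) * (c - 1) + 1 ≤ k) :=
          fun hh => h (Or.inr (Or.inr ⟨h1, hh⟩))
        omega
      set a := i - (p v : ℕ) with ha
      have hm := mul_pred_add a (show 1 ≤ c by omega)
      rw [show i + k + 1 = ((p v : ℕ) + 1) + a * c from by omega,
        Nat.add_mul_mod_self_right]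

lemma InS_closed (he : Function.Injective e) (hc : 2 ≤ c) (hw : (p w : ℕ) = i)
    (hadj : ∀ w₁ w₂ : W, G.Adj w₁ w₂ ↔ (pathGraph t).Adj (p w₁) (p w₂))
    {k : ℕ} {u v : W} (hu : InS c i p w (k + 1) u)
    (huv : (monoSubgraph G (stateCol c i p w e k)).Adj u v) : InS c i p w (k + 1) v := by
  obtain ⟨hGadj, hcol⟩ := huv
  have hpath := pathGraph_adj.1 ((hadj u v).1 hGadj)
  by_cases hv : InS c i p w k v
  · exact InS_mono (Nat.le_succ k) hv
  · have hcv : stateCol c i p w e k v = e (((p v : ℕ) + 1 : ℕ) : ZMod c) := by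
      simp only [stateCol, if_neg hv]
    have hcu := colour_of_mem (e := e) he hc hu
    have hmod : ((p v : ℕ) + 1) % c = (i + k + 1) % c := by
      rw [← e_eq_iff he, ← hcv, ← hcu]
      exact hcol.symm
    rcases Nat.lt_trichotomy (p v : ℕ) i with hlt | heq | hgt
    · -- v lies strictly left of class i
      refine Or.inr (Or.inr ⟨hlt, ?_⟩)
      set a := i - (p v : ℕ) with ha
      have hdvd : c ∣ k + a := by
        have h2 : i + k + 1 - ((p v : ℕ) + 1) = k + a := by omega
        have := (Nat.modEq_iff_dvd' (show (p v : ℕ) + 1 ≤ i + k + 1 by omega)).1 hmod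
        rwa [h2] at this
      rcases hpath with hp1 | hp1
      · -- pu + 1 = pv, so pu < pv < i
        rcases hu with ⟨h1, _⟩ | ⟨h1, _⟩ | ⟨h1, h2⟩
        · omega
        · omega
        · have hA : i - (p u : ℕ) = a + 1 := by omega
          rw [hA] at h2
          have hstep : a * (c - 1) ≤ (a + 1) * (c - 1) := Nat.mul_le_mul_right _ (by omega)
          omega
      · -- pv + 1 = pu
        rcases Nat.lt_or_ge (p u : ℕ) i with hui | hui
        · rcases hu with ⟨h1, _⟩ | ⟨h1, _⟩ | ⟨h1, h2⟩
          · omega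
          · omega
          · set b := i - (p u : ℕ) with hb
            have hba : b + 1 = a := by omega
            obtain ⟨m, hm⟩ := hdvd
            have e1 := mul_pred_add b (show 1 ≤ c by omega)
            have e6 : c * b = b * c := Nat.mul_comm c b
            have e2 : c * b < c * m := by omega
            have e3 : b < m := Nat.lt_of_mul_lt_mul_left e2
            have e4 : c * a ≤ c * m := Nat.mul_le_mul_left c (by omega)
            have e5 := mul_pred_add a (show 1 ≤ c by omega)
            have e7 : c * a = a * c := Nat.mul_comm c a
            omega
        · -- pu = i, a = 1
          have ha1 : a = 1 := by omega
          have hc1 : c ≤ k + 1 := Nat.le_of_dvd (by omega) (by rwa [ha1] at hdvd)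
          rw [ha1]
          omega
    · -- pv = i
      by_cases hvw : v = w
      · exact Or.inl ⟨heq, Or.inl hvw⟩
      · refine Or.inl ⟨heq, Or.inr ?_⟩
        have hdvd : c ∣ k := by
          have h2 : i + k + 1 - ((p v : ℕ) + 1) = k := by omega
          have := (Nat.modEq_iff_dvd' (show (p v : ℕ) + 1 ≤ i + k + 1 by omega)).1 hmod
          rwa [h2] at this
        have hk1 : 1 ≤ k := by
          by_contra hk0
          have hk0' : k = 0 := by omega
          subst hk0'
          rcases hu with ⟨h1, _⟩ | ⟨h1, h2⟩ | ⟨h1, h2⟩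
          · omega
          · omega
          · have hz : (i - (p u : ℕ)) * (c - 1) = 0 := by omega
            rcases Nat.mul_eq_zero.1 hz with h3 | h3 <;> omega
        have := Nat.le_of_dvd (by omega) hdvd
        omega
    · -- i < pv
      refine Or.inr (Or.inl ⟨hgt, ?_⟩)
      have hpu : (p u : ℕ) ≤ i + k := by
        rcases hu with ⟨h1, _⟩ | ⟨h1, h2⟩ | ⟨h1, _⟩ <;> omega
      by_contra hcon
      have hpv : (p v : ℕ) = i + k + 1 := by omega
      have hmod' : (i + k + 1) % c = (i + k + 1 + 1) % c := by
        rw [← hpv] at hmod ⊢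
        omega
      have hd : c ∣ 1 := by
        have h1 := (Nat.modEq_iff_dvd' (show i + k + 1 ≤ i + k + 1 + 1 by omega)).1 hmod'
        simpa using h1
      have := Nat.le_of_dvd one_pos hd
      omega

lemma reach_of_mem (he : Function.Injective e) (hc : 2 ≤ c) (hw : (p w : ℕ) = i)
    (hp : Function.Surjective p)
    (hadj : ∀ w₁ w₂ : W, G.Adj w₁ w₂ ↔ (pathGraph t).Adj (p w₁) (p w₂))
    (hi1 : i + 1 < t) {k : ℕ} {v : W} (hv : InS c i p w (k + 1) v) :
    (monoSubgraph G (stateCol c i p w e k)).Reachable w v := by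
  have hmono : ∀ x y : W, InS c i p w (k + 1) x → InS c i p w (k + 1) y →
      ((p x : ℕ) + 1 = (p y : ℕ) ∨ (p y : ℕ) + 1 = (p x : ℕ)) →
      (monoSubgraph G (stateCol c i p w e k)).Adj x y := by
    intro x y hx hy hxy
    refine ⟨(hadj x y).2 (pathGraph_adj.2 hxy), ?_⟩
    rw [colour_of_mem (e := e) he hc hx, colour_of_mem (e := e) he hc hy]
  have hwS : InS c i p w (k + 1) w := Or.inl ⟨hw, Or.inl rfl⟩
  have hright : ∀ a : ℕ, ∀ v : W, (p v : ℕ) = i + a → 1 ≤ a → a ≤ k →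
      (monoSubgraph G (stateCol c i p w e k)).Reachable w v := by
    intro a
    induction a with
    | zero => intro v _ h2 _; omega
    | succ a ih =>
      intro v hpv h1 h2
      have hvS : InS c i p w (k + 1) v := Or.inr (Or.inl ⟨by omega, by omega⟩)
      by_cases ha : a = 0
      · subst ha
        exact (hmono w v hwS hvS (Or.inl (by omega))).reachable
      · have hvt : (p v : ℕ) < t := (p v).isLt
        obtain ⟨u, hu⟩ := hp ⟨i + a, by omega⟩
        have hpu : (p u : ℕ) = i + a := by rw [hu]
        have huS : InS c i p w (k + 1) u := Or.inr (Or.inl ⟨by omega, by omega⟩)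
        exact (ih u hpu (by omega) (by omega)).trans
          (hmono u v huS hvS (Or.inl (by omega))).reachable
  have hleft : ∀ a : ℕ, ∀ v : W, (p v : ℕ) + a = i → 1 ≤ a →
      a * (c - 1) + 1 ≤ k + 1 →
      (monoSubgraph G (stateCol c i p w e k)).Reachable w v := by
    intro a
    induction a with
    | zero => intro v _ h2 _; omega
    | succ a ih =>
      intro v hpv h1 h2
      have hvS : InS c i p w (k + 1) v :=
        Or.inr (Or.inr ⟨by omega, by rw [show i - (p v : ℕ) = a + 1 from by omega]; exact h2⟩)
      by_cases ha : a = 0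
      · subst ha
        exact (hmono w v hwS hvS (Or.inr (by omega))).reachable
      · obtain ⟨u, hu⟩ := hp ⟨(p v : ℕ) + 1, by omega⟩
        have hpu : (p u : ℕ) = (p v : ℕ) + 1 := by rw [hu]
        have hmul : a * (c - 1) ≤ (a + 1) * (c - 1) := Nat.mul_le_mul_right _ (by omega)
        have h2' : a * (c - 1) + 1 ≤ k + 1 := by omega
        have huS : InS c i p w (k + 1) u :=
          Or.inr (Or.inr ⟨by omega, by rw [show i - (p u : ℕ) = a from by omega]; exact h2'⟩)
        exact (ih u (by omega) (by omega) h2').trans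
          (hmono u v huS hvS (Or.inr (by omega))).reachable
  rcases hv with ⟨h1, h2⟩ | ⟨h1, h2⟩ | ⟨h1, h2⟩
  · rcases h2 with rfl | h2
    · exact Reachable.refl _
    · obtain ⟨u, hu⟩ := hp ⟨i + 1, hi1⟩
      have hpu : (p u : ℕ) = i + 1 := by rw [hu]
      have huS : InS c i p w (k + 1) u := Or.inr (Or.inl ⟨by omega, by omega⟩)
      have hvS : InS c i p w (k + 1) v := Or.inl ⟨h1, Or.inr h2⟩
      exact (hright 1 u hpu le_rfl (by omega)).trans
        (hmono u v huS hvS (Or.inr (by omega))).reachable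
  · exact hright ((p v : ℕ) - i) v (by omega) (by omega) (by omega)
  · exact hleft (i - (p v : ℕ)) v (by omega) (by omega) h2

lemma reach_iff (he : Function.Injective e) (hc : 2 ≤ c) (hw : (p w : ℕ) = i)
    (hp : Function.Surjective p)
    (hadj : ∀ w₁ w₂ : W, G.Adj w₁ w₂ ↔ (pathGraph t).Adj (p w₁) (p w₂))
    (hi1 : i + 1 < t) {k : ℕ} {v : W} :
    (monoSubgraph G (stateCol c i p w e k)).Reachable w v ↔ InS c i p w (k + 1) v := by
  constructor
  · intro h
    obtain ⟨q⟩ := h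
    have main : ∀ x y : W, (monoSubgraph G (stateCol c i p w e k)).Walk x y →
        InS c i p w (k + 1) x → InS c i p w (k + 1) y := by
      intro x y q
      induction q with
      | nil => exact id
      | cons h' q' ih => exact fun hx => ih (InS_closed he hc hw hadj hx h')
    exact main w v q (Or.inl ⟨hw, Or.inl rfl⟩)
  · exact reach_of_mem he hc hw hp hadj hi1

lemma step (he : Function.Injective e) (hc : 2 ≤ c) (hw : (p w : ℕ) = i)
    (hp : Function.Surjective p)
    (hadj : ∀ w₁ w₂ : W, G.Adj w₁ w₂ ↔ (pathGraph t).Adj (p w₁) (p w₂))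
    (hi1 : i + 1 < t) (k : ℕ) :
    floodMove G (stateCol c i p w e k) w (e ((i + k + 2 : ℕ) : ZMod c)) =
      stateCol c i p w e (k + 1) := by
  funext v
  simp only [floodMove]
  by_cases hv : InS c i p w (k + 1) v
  · rw [if_pos ((reach_iff he hc hw hp hadj hi1).2 hv)]
    simp only [stateCol, if_pos hv, show i + (k + 1) + 1 = i + k + 2 from by omega]
  · rw [if_neg (fun hr => hv ((reach_iff he hc hw hp hadj hi1).1 hr))]
    have hv' : ¬ InS c i p w k v := fun h => hv (InS_mono (Nat.le_succ k) h)
    simp only [stateCol, if_neg hv, if_neg hv']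

lemma floodSeq_append (G : SimpleGraph W) (l₁ l₂ : List (W × C)) (ω : W → C) :
    floodSeq G (l₁ ++ l₂) ω = floodSeq G l₂ (floodSeq G l₁ ω) := by
  induction l₁ generalizing ω with
  | nil => rfl
  | cons m l ih => simp [floodSeq, ih]

end FloodAux

open FloodAux in
/-- If `G` is a blow-up of the path `P_t` (via the class map `p`) and `ω = f ∘ p` is a
`C`-rainbow colouring of `G` (i.e. the induced colouring `f` of `P_t` is a `C`-rainbow,
that is `0`-shifted `C`-rainbow, colouring), with `|C| = c ≥ 2` and `t ≥ c + 2`, then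
`m(G, ω) ≤ t - ⌈t / c⌉`. -/
theorem rainbow_blowup_floodCostMin_le {W C : Type*} [Fintype W] (G : SimpleGraph W)
    (t c : ℕ) (hc : 2 ≤ c) (ht : c + 2 ≤ t)
    (p : W → Fin t) (hp : Function.Surjective p)
    (hadj : ∀ w₁ w₂ : W, G.Adj w₁ w₂ ↔ (SimpleGraph.pathGraph t).Adj (p w₁) (p w₂))
    (f : Fin t → C) (hf : IsShiftedRainbow c 0 f) :
    floodCostMin G (f ∘ p) ≤ t - (t + c - 1) / c := by
  obtain ⟨e, he, hfe⟩ := hf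
  have hdm := Nat.div_add_mod (t + c - 1) c
  have hmlt : (t + c - 1) % c < c := Nat.mod_lt _ (by omega)
  set s := (t + c - 1) / c with hs
  have hts : t ≤ c * s := by omega
  have hsc : c * s ≤ t + c - 1 := by omega
  have hs2 : 2 ≤ s := by
    rw [hs, Nat.le_div_iff_mul_le (show 0 < c by omega)]
    omega
  have hst : s + c ≤ t := by
    by_contra hlt
    push_neg at hlt
    have h5 : s * (c - 1) + s = s * c := mul_pred_add s (by omega)
    have h6 : s * c = c * s := Nat.mul_comm s c
    have h7 : s * (c - 1) ≤ 2 * (c - 1) := by omega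
    have h8 : s ≤ 2 := Nat.le_of_mul_le_mul_right h7 (by omega)
    omega
  set i := s - 1 with hi
  set R := t - s with hR
  obtain ⟨w, hw0⟩ := hp ⟨i, by omega⟩
  have hw : (p w : ℕ) = i := by rw [hw0]
  have hi1 : i + 1 < t := by omega
  have hfep : ∀ v, (f ∘ p) v = e (((p v : ℕ) + 1 : ℕ) : ZMod c) := by
    intro v
    have h := hfe (p v)
    rw [Function.comp_apply, h, Nat.cast_zero, sub_zero]
  have hinv : ∀ k : ℕ,
      floodSeq G ((List.range k).map (fun j => (w, e ((i + j + 2 : ℕ) : ZMod c)))) (f ∘ p) =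
        stateCol c i p w e k := by
    intro k
    induction k with
    | zero =>
      simp only [List.range_zero, List.map_nil, floodSeq]
      funext v
      rw [hfep v]
      simp only [stateCol]
      split
      case isTrue h =>
        rcases h with ⟨h1, _⟩ | ⟨h1, h2⟩ | ⟨h1, h2⟩
        · rw [h1]
        · omega
        · omega
      case isFalse h => rfl
    | succ k ih =>
      rw [List.range_succ, List.map_append, floodSeq_append, ih]
      simp only [List.map_cons, List.map_nil, floodSeq]
      exact step he.injective hc hw hp hadj hi1 k
  have hfinal : ∀ v,
      floodSeq G ((List.range R).map (fun j => (w, e ((i + j + 2 : ℕ) : ZMod c)))) (f ∘ p) v =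
        e ((t : ℕ) : ZMod c) := by
    intro v
    rw [hinv R]
    simp only [stateCol]
    split
    case isTrue h => rw [show i + R + 1 = t from by omega]
    case isFalse h =>
      rw [e_eq_iff he.injective]
      have hvt : (p v : ℕ) < t := (p v).isLt
      rcases Nat.lt_trichotomy (p v : ℕ) i with hlt | heq | hgt
      · set a := i - (p v : ℕ) with ha
        have hna : ¬ (a * (c - 1) + 1 ≤ R) := fun hh => h (Or.inr (Or.inr ⟨hlt, hh⟩))
        have hmono2 : a * (c - 1) ≤ i * (c - 1) := Nat.mul_le_mul_right _ (by omega)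
        have e1 := mul_pred_add i (show 1 ≤ c by omega)
        have e2 : i * c + c = (i + 1) * c := (Nat.succ_mul i c).symm
        have e2' : (i + 1) * c = s * c := by rw [show i + 1 = s from by omega]
        have e3 : s * c = c * s := Nat.mul_comm s c
        have e4 := mul_pred_add (i - 1) (show 1 ≤ c by omega)
        have e5 : (i - 1) * c + c = (i - 1 + 1) * c := (Nat.succ_mul (i - 1) c).symm
        have ha2 : a = i := by
          by_contra hne
          have ha3 : a ≤ i - 1 := by omega
          have hmono3 : a * (c - 1) ≤ (i - 1) * (c - 1) := Nat.mul_le_mul_right _ (by omega)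
          have e5' : (i - 1 + 1) * c = i * c := by rw [show i - 1 + 1 = i from by omega]
          omega
        have hsc2 : c * s = t + c - 1 := by omega
        have hpv0 : (p v : ℕ) = 0 := by omega
        have htt : t = 1 + i * c := by omega
        rw [hpv0, htt, Nat.add_mul_mod_self_right]
      · have hnc : ¬ (c + 1 ≤ R) := fun hh => h (Or.inl ⟨heq, Or.inr hh⟩)
        have hRc : c ≤ R := by omega
        rw [heq, show t = (i + 1) + c from by omega, Nat.add_mod_right]
      · have hnr : ¬ ((p v : ℕ) < i + R) := fun hh => h (Or.inr (Or.inl ⟨hgt, hh⟩))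
        rw [show (p v : ℕ) = t - 1 from by omega, show t - 1 + 1 = t from by omega]
  have h1 : floodCost G (f ∘ p) (e ((t : ℕ) : ZMod c)) ≤ R := by
    apply Nat.sInf_le
    exact ⟨(List.range R).map (fun j => (w, e ((i + j + 2 : ℕ) : ZMod c))), by simp, hfinal⟩
  have h2 : floodCostMin G (f ∘ p) ≤ floodCost G (f ∘ p) (e ((t : ℕ) : ZMod c)) :=
    Nat.sInf_le ⟨_, rfl⟩
  exact le_trans h2 h1
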